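/- Let p be a prime, k ≥ 1, and z ∈ ℂ_p with |z−1|_p ≥ 1. Then for all N ≥ 0 and 0 ≤ a ≤ p^N − 1, the twisted Bernoulli measure value satisfies |p^{N(k−1)} z^a β_k(a/p^N, z^{p^N})|_p ≤ 1. -/

import Mathlib

/-- The twisted Bernoulli polynomial `β_k(x,y)`, defined (for `y ≠ 1`) by the
exponential generating function `t·e^{xt}/(y·e^t − 1) = Σ_{k≥0} β_k(x,y) t^k/k!`. -/
noncomputable def twistedBernoulli {K : Type*} [Field K] [CharZero K] (k : ℕ) (x y : K) : K :=
  (k.factorial : K) *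
    PowerSeries.coeff (R := K) k
      (PowerSeries.X * PowerSeries.rescale x (PowerSeries.exp K) *
        (PowerSeries.C (R := K) y * PowerSeries.exp K - 1)⁻¹)

open PowerSeries Finset

section Aux

variable {K : Type*} [NormedField K] [IsUltrametricDist K]

private lemma norm_sub_eq_of_norm_lt' {a b : K} (h : ‖b‖ < ‖a‖) : ‖a - b‖ = ‖a‖ := by
  refine le_antisymm ?_ ?_
  · rw [sub_eq_add_neg]
    exact (IsUltrametricDist.norm_add_le_max a (-b)).trans (by simp [h.le])
  · have := IsUltrametricDist.norm_add_le_max (a - b) b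
    simp only [sub_add_cancel] at this
    rcases le_max_iff.mp this with h' | h'
    · exact h'
    · exact absurd h' (not_le.mpr h)

private lemma norm_pow_sub_one' (p : ℕ) (hp : p.Prime) (hnorm : ‖(p : K)‖ = (p : ℝ)⁻¹)
    (z : K) (hz : 1 ≤ ‖z - 1‖) (N : ℕ) :
    ‖z ^ (p ^ N) - 1‖ = max 1 ‖z‖ ^ (p ^ N) := by
  have hP1 : 1 ≤ p ^ N := Nat.one_le_pow _ _ hp.pos
  rcases le_or_gt ‖z‖ 1 with h | h
  · rw [max_eq_left h, one_pow]
    have hw : ‖z - 1‖ = 1 := by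
      refine le_antisymm ?_ hz
      have := IsUltrametricDist.norm_add_le_max z (-1)
      rw [← sub_eq_add_neg, norm_neg, norm_one] at this
      exact this.trans (by simp [h])
    set P := p ^ N with hPdef
    set w := z - 1 with hwdef
    have hzw : z = w + 1 := by rw [hwdef]; ring
    have hbin : z ^ P - 1 = w ^ P +
        ∑ m ∈ Finset.range (P - 1), w ^ (m + 1) * ((P.choose (m + 1) : K)) := by
      rw [hzw, add_pow]
      have hPs : P = (P - 1) + 1 := by omega
      rw [show P + 1 = ((P-1) + 1) + 1 by omega, Finset.sum_range_succ, Finset.sum_range_succ']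
      simp only [one_pow, mul_one, ← hPs]
      rw [Nat.choose_self, Nat.choose_zero_right]
      push_cast
      ring
    have hT : ‖∑ m ∈ Finset.range (P - 1), w ^ (m + 1) * ((P.choose (m + 1) : K))‖
        ≤ (p : ℝ)⁻¹ := by
      refine IsUltrametricDist.norm_sum_le_of_forall_le_of_nonneg (by positivity) ?_
      intro m hm
      rw [Finset.mem_range] at hm
      obtain ⟨c, hc⟩ := hp.dvd_choose_pow (Nat.succ_ne_zero m)
        (show m + 1 ≠ p ^ N by omega)
      rw [hPdef, hc, norm_mul, norm_pow, hw, one_pow, one_mul, Nat.cast_mul, norm_mul, hnorm]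
      calc ((p:ℝ))⁻¹ * ‖(c : K)‖ ≤ (p:ℝ)⁻¹ * 1 := by
            refine mul_le_mul_of_nonneg_left (IsUltrametricDist.norm_natCast_le_one K c)
              (by positivity)
        _ = (p:ℝ)⁻¹ := mul_one _
    have hTlt : ‖∑ m ∈ Finset.range (P - 1), w ^ (m + 1) * ((P.choose (m + 1) : K))‖ < 1 := by
      refine hT.trans_lt (inv_lt_one_of_one_lt₀ ?_)
      exact_mod_cast hp.one_lt
    have hwP : ‖w ^ P‖ = 1 := by rw [norm_pow, hw, one_pow]
    rw [hbin, ← sub_neg_eq_add, norm_sub_eq_of_norm_lt' (by rw [norm_neg, hwP]; exact hTlt), hwP]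
  · rw [max_eq_right h.le]
    have h1 : ‖(1 : K)‖ < ‖z ^ (p ^ N)‖ := by
      rw [norm_one, norm_pow]
      exact one_lt_pow₀ h (by positivity)
    rw [norm_sub_eq_of_norm_lt' h1, norm_pow]

variable [CharZero K]

private lemma coeff_rec' (y : K) (hy : y - 1 ≠ 0) (n : ℕ) :
    ∑ ij ∈ antidiagonal n,
      (if ij.1 = 0 then y - 1 else y * ((Nat.factorial ij.1 : K))⁻¹) *
        coeff (R := K) ij.2 ((C (R := K) y * exp K - 1)⁻¹) = if n = 0 then 1 else 0 := by
  have hc : constantCoeff (R := K) (C (R := K) y * exp K - 1) ≠ 0 := by simpa using hy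
  have h1 : (C (R := K) y * exp K - 1) * (C (R := K) y * exp K - 1)⁻¹ = 1 :=
    PowerSeries.mul_inv_cancel _ hc
  have h2 := congrArg (coeff (R := K) n) h1
  rw [coeff_mul, coeff_one] at h2
  rw [← h2]
  refine Finset.sum_congr rfl fun ij hij => ?_
  congr 1
  rw [map_sub, coeff_C_mul, coeff_exp, PowerSeries.coeff_one]
  rcases eq_or_ne ij.1 0 with h | h
  · simp [h]
  · simp [h, Nat.factorial, map_div₀, div_eq_mul_inv]

private lemma coeff_bound' (y : K) (hy : 1 ≤ ‖y - 1‖) (n : ℕ) :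
    ‖(Nat.factorial n : K) * coeff (R := K) n ((C (R := K) y * exp K - 1)⁻¹)‖
      ≤ max 1 ‖y‖ ^ n / ‖y - 1‖ ^ (n + 1) := by
  set D := ‖y - 1‖ with hD
  set M := max 1 ‖y‖ with hM
  have hD0 : (0 : ℝ) < D := lt_of_lt_of_le one_pos hy
  have hyM : ‖y‖ ≤ M := le_max_right _ _
  have hM1 : (1 : ℝ) ≤ M := le_max_left _ _
  have hDM : D ≤ M := by
    have := IsUltrametricDist.norm_add_le_max y (-1)
    simpa [hD, hM, sub_eq_add_neg, max_comm] using this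
  have hy0 : y - 1 ≠ 0 := norm_pos_iff.mp hD0
  have hMD1 : (1 : ℝ) ≤ M / D := (one_le_div hD0).mpr hDM
  induction n using Nat.strong_induction_on with
  | _ n IH =>
    rcases Nat.eq_zero_or_pos n with rfl | hn
    · rw [coeff_zero_eq_constantCoeff, constantCoeff_inv]
      have : constantCoeff (R := K) (C (R := K) y * exp K - 1) = y - 1 := by simp
      rw [this]
      simp [norm_inv, pow_one, one_div, hD]
    · have hrec := coeff_rec' y hy0 n
      rw [if_neg hn.ne'] at hrec
      have hmem : ((0 : ℕ), n) ∈ antidiagonal n := by simp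
      rw [← Finset.add_sum_erase _ _ hmem] at hrec
      simp only [if_pos rfl, if_true] at hrec
      have hsplit : (y - 1) * coeff (R := K) n ((C (R := K) y * exp K - 1)⁻¹)
          = -∑ ij ∈ (antidiagonal n).erase (0, n),
              (if ij.1 = 0 then y - 1 else y * ((Nat.factorial ij.1 : K))⁻¹) *
                coeff (R := K) ij.2 ((C (R := K) y * exp K - 1)⁻¹) :=
        eq_neg_of_add_eq_zero_left hrec
      have key : (y - 1) * ((Nat.factorial n : K) * coeff (R := K) n ((C (R := K) y * exp K - 1)⁻¹))
          = -∑ ij ∈ (antidiagonal n).erase (0, n),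
              (Nat.factorial n : K) *
                ((if ij.1 = 0 then y - 1 else y * ((Nat.factorial ij.1 : K))⁻¹) *
                  coeff (R := K) ij.2 ((C (R := K) y * exp K - 1)⁻¹)) := by
        rw [mul_left_comm, hsplit, mul_neg, Finset.mul_sum]
      have hnorm_sum : ‖∑ ij ∈ (antidiagonal n).erase (0, n),
              (Nat.factorial n : K) *
                ((if ij.1 = 0 then y - 1 else y * ((Nat.factorial ij.1 : K))⁻¹) *
                  coeff (R := K) ij.2 ((C (R := K) y * exp K - 1)⁻¹))‖ ≤ (M / D) ^ n := by
        refine IsUltrametricDist.norm_sum_le_of_forall_le_of_nonneg (by positivity) ?_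
        rintro ⟨i, j⟩ hij
        obtain ⟨hij1, hij2⟩ := Finset.mem_erase.mp hij
        have hsum : i + j = n := by simpa using hij2
        have hi0 : i ≠ 0 := by
          rintro rfl
          exact hij1 (by simp [← hsum])
        have hjn : j + 1 ≤ n := by omega
        rw [if_neg hi0]
        have hj : n - i = j := by omega
        have hfacts := Nat.choose_mul_factorial_mul_factorial (show i ≤ n by omega)
        rw [hj] at hfacts
        have hfact : (Nat.factorial n : K)
            = (n.choose i : K) * (Nat.factorial i : K) * (Nat.factorial j : K) := by
          rw [← hfacts]; push_cast; ring
        have hfi : (Nat.factorial i : K) ≠ 0 := Nat.cast_ne_zero.mpr (Nat.factorial_ne_zero i)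
        have heq : (Nat.factorial n : K) *
            ((y * ((Nat.factorial i : K))⁻¹) * coeff (R := K) j ((C (R := K) y * exp K - 1)⁻¹))
            = y * ((n.choose i : K) *
                ((Nat.factorial j : K) * coeff (R := K) j ((C (R := K) y * exp K - 1)⁻¹))) := by
          rw [hfact]; field_simp
        rw [heq]
        have h1 : ‖y * ((n.choose i : K) *
            ((Nat.factorial j : K) * coeff (R := K) j ((C (R := K) y * exp K - 1)⁻¹)))‖
            ≤ M * (1 * (M ^ j / D ^ (j + 1))) := by
          rw [norm_mul, norm_mul]
          exact mul_le_mul hyM (mul_le_mul (IsUltrametricDist.norm_natCast_le_one K _)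
            (IH j (by omega)) (norm_nonneg _) zero_le_one) (by positivity) (by positivity)
        refine h1.trans ?_
        have h2 : M * (1 * (M ^ j / D ^ (j + 1))) = (M / D) ^ (j + 1) := by
          rw [div_pow]; field_simp; ring
        rw [h2]
        exact pow_le_pow_right₀ hMD1 hjn
      have hnn : D * ‖(Nat.factorial n : K) * coeff (R := K) n ((C (R := K) y * exp K - 1)⁻¹)‖
          ≤ (M / D) ^ n := by
        rw [← norm_mul] at *
        rw [key, norm_neg]
        exact hnorm_sum
      have : ‖(Nat.factorial n : K) * coeff (R := K) n ((C (R := K) y * exp K - 1)⁻¹)‖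
          ≤ (M / D) ^ n / D := by
        rw [le_div_iff₀ hD0, mul_comm]
        exact hnn
      refine this.trans (le_of_eq ?_)
      rw [div_pow, div_div, ← pow_succ]

end Aux

/-- The values of the twisted Bernoulli measure are bounded by 1: for `z` in a `ℂ_p`-like
field with `|z−1| ≥ 1`, `k ≥ 1`, `N ≥ 0` and `0 ≤ a ≤ p^N − 1`,
`|p^{N(k−1)} z^a β_k(a/p^N, z^{p^N})| ≤ 1`. -/
theorem twistedBernoulli_measure_bounded
    {K : Type*} [NormedField K] [IsUltrametricDist K] [CharZero K]
    (p : ℕ) (hp : p.Prime) (hnorm : ‖(p : K)‖ = (p : ℝ)⁻¹)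
    (k : ℕ) (hk : 1 ≤ k) (z : K) (hz : 1 ≤ ‖z - 1‖)
    (N a : ℕ) (ha : a ≤ p ^ N - 1) :
    ‖(p : K) ^ (N * (k - 1)) * z ^ a *
        twistedBernoulli k ((a : K) / (p : K) ^ N) (z ^ (p ^ N))‖ ≤ 1 := by
  obtain ⟨k', rfl⟩ : ∃ k', k = k' + 1 := ⟨k - 1, by omega⟩
  simp only [Nat.add_sub_cancel]
  have hP1 : 1 ≤ p ^ N := Nat.one_le_pow _ _ hp.pos
  have haP : a ≤ p ^ N := by omega
  set P := p ^ N with hPdef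
  set m := max 1 ‖z‖ with hm
  have hm1 : (1 : ℝ) ≤ m := le_max_left _ _
  have hzm : ‖z‖ ≤ m := le_max_right _ _
  have hu : ‖z ^ P - 1‖ = m ^ P := norm_pow_sub_one' p hp hnorm z hz N
  have hy1 : (1 : ℝ) ≤ ‖z ^ P - 1‖ := by rw [hu]; exact one_le_pow₀ hm1
  set y := z ^ P with hy
  set x := (a : K) / (p : K) ^ N with hx
  set g := (C (R := K) y * exp K - 1)⁻¹ with hg
  have hMy : max 1 ‖y‖ ≤ m ^ P := by
    refine max_le (one_le_pow₀ hm1) ?_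
    rw [hy, norm_pow]
    exact pow_le_pow_left₀ (norm_nonneg z) hzm P
  have hpK : (p : K) ≠ 0 := Nat.cast_ne_zero.mpr hp.pos.ne'
  have hpnorm1 : ‖(p : K)‖ ≤ 1 := by
    rw [hnorm]
    have : (1 : ℝ) ≤ (p : ℝ) := by exact_mod_cast hp.one_lt.le
    exact inv_le_one_of_one_le₀ this
  rw [twistedBernoulli]
  rw [mul_assoc X, coeff_succ_X_mul, coeff_mul, Finset.mul_sum, Finset.mul_sum]
  simp only [← hg]
  refine IsUltrametricDist.norm_sum_le_of_forall_le_of_nonneg zero_le_one ?_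
  rintro ⟨i, j⟩ hij
  have hsum : i + j = k' := by simpa using hij
  have hcoeff : coeff (R := K) i (rescale x (exp K)) = x ^ i * ((Nat.factorial i : K))⁻¹ := by
    rw [coeff_rescale, coeff_exp, one_div, map_inv₀, map_natCast]
  -- factorial identity
  have hj : k' - i = j := by omega
  have hfacts := Nat.choose_mul_factorial_mul_factorial (show i ≤ k' by omega)
  rw [hj] at hfacts
  have hfk : ((k' + 1).factorial : K)
      = ((k' + 1 : ℕ) : K) * (k'.choose i : K) * (Nat.factorial i : K) * (Nat.factorial j : K) := by
    rw [Nat.factorial_succ, ← hfacts]; push_cast; ring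
  have hfi : (Nat.factorial i : K) ≠ 0 := Nat.cast_ne_zero.mpr (Nat.factorial_ne_zero i)
  have hppow : (p : K) ^ (N * k') = (p : K) ^ (N * i) * (p : K) ^ (N * j) := by
    rw [← pow_add, ← Nat.mul_add, hsum]
  have hxpow : x ^ i = (a : K) ^ i / (p : K) ^ (N * i) := by
    rw [hx, div_pow, ← pow_mul]
  have hpne : (p : K) ^ (N * i) ≠ 0 := pow_ne_zero _ hpK
  have heq : (p : K) ^ (N * k') * z ^ a * (((k' + 1).factorial : K) *
        (coeff (R := K) i (rescale x (exp K)) * coeff (R := K) j g))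
      = (((k' + 1) * k'.choose i * a ^ i : ℕ) : K) *
          ((p : K) ^ (N * j) * (z ^ a * ((Nat.factorial j : K) * coeff (R := K) j g))) := by
    rw [hcoeff, hfk, hxpow, hppow]
    push_cast
    field_simp
  rw [heq]
  have hdj := coeff_bound' y hy1 j
  rw [hu] at hdj
  -- numeric bound
  have hfinal : ‖z‖ ^ a * (max 1 ‖y‖ ^ j / (m ^ P) ^ (j + 1)) ≤ 1 := by
    have hnum : ‖z‖ ^ a * max 1 ‖y‖ ^ j ≤ (m ^ P) ^ (j + 1) := by
      have h1 : ‖z‖ ^ a ≤ m ^ P := by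
        calc ‖z‖ ^ a ≤ m ^ a := pow_le_pow_left₀ (norm_nonneg z) hzm a
          _ ≤ m ^ P := pow_le_pow_right₀ hm1 haP
      have h2 : max 1 ‖y‖ ^ j ≤ (m ^ P) ^ j :=
        pow_le_pow_left₀ (le_trans zero_le_one (le_max_left _ _)) hMy j
      calc ‖z‖ ^ a * max 1 ‖y‖ ^ j ≤ m ^ P * (m ^ P) ^ j :=
            mul_le_mul h1 h2 (by positivity) (by positivity)
        _ = (m ^ P) ^ (j + 1) := by rw [pow_succ]; ring
    rw [mul_div_assoc'] at *
    rw [div_le_one (by positivity)]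
    exact hnum
  calc ‖(((k' + 1) * k'.choose i * a ^ i : ℕ) : K) *
          ((p : K) ^ (N * j) * (z ^ a * ((Nat.factorial j : K) * coeff (R := K) j g)))‖
      = ‖(((k' + 1) * k'.choose i * a ^ i : ℕ) : K)‖ *
          (‖(p : K) ^ (N * j)‖ * (‖z ^ a‖ * ‖(Nat.factorial j : K) * coeff (R := K) j g‖)) := by
        rw [norm_mul, norm_mul, norm_mul]
    _ ≤ 1 * (1 * (‖z‖ ^ a * (max 1 ‖y‖ ^ j / (m ^ P) ^ (j + 1)))) := by
        refine mul_le_mul (IsUltrametricDist.norm_natCast_le_one K _) ?_ (by positivity)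
          zero_le_one
        refine mul_le_mul ?_ ?_ (by positivity) zero_le_one
        · rw [norm_pow]
          exact pow_le_one₀ (norm_nonneg _) hpnorm1
        · refine mul_le_mul (le_of_eq (norm_pow z a)) ?_ (norm_nonneg _) (by positivity)
          simpa only [← hg] using hdj
    _ ≤ 1 := by rw [one_mul, one_mul]; exact hfinal
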